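/- Let γ : ℝ/ℤ → ℝ³ be a closed unit-speed curve with security radius r(·) bounded below on a neighborhood of s = 0, with γ(0) = 0, γ'(0) = e₃, and r₀ := r(0). Then for all 0 < h < r₀ one has (writing γ = (γ_⊥, γ_∥) ∈ ℝ² × ℝ): γ_∥'(h) ≥ 1 − h²/(2r₀²), |γ_⊥'(h)| ≤ h/r₀, h ≥ γ_∥(h) ≥ h(1 − h²/(6r₀²)), and |γ_⊥(h)| ≤ h²/(2r₀). -/

import Mathlib

open MeasureTheory
open scoped ENNReal NNReal

noncomputable section

abbrev E3 := EuclideanSpace ℝ (Fin 3)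

end

section Helpers

open Filter intervalIntegral
open scoped Topology

variable {E : Type*} [NormedAddCommGroup E] [NormedSpace ℝ E]

private noncomputable def quot' (f : ℝ → E) (n : ℕ) (t : ℝ) : E :=
  ((n : ℝ) + 1) • (f (t + ((n : ℝ) + 1)⁻¹) - f t)

private lemma quot'_continuous {f : ℝ → E} (hf : Continuous f) (n : ℕ) :
    Continuous (quot' f n) :=
  ((hf.comp (continuous_id.add continuous_const)).sub hf).const_smul _

private lemma tendsto_quot' {f : ℝ → E} {v : E} {t : ℝ} (h : HasDerivAt f v t) :
    Tendsto (fun n => quot' f n t) atTop (𝓝 v) := by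
  have hslope := hasDerivAt_iff_tendsto_slope.mp h
  have hpos : ∀ n : ℕ, (0:ℝ) < ((n : ℝ) + 1)⁻¹ := fun n => by positivity
  have hx : Tendsto (fun n : ℕ => t + ((n : ℝ) + 1)⁻¹) atTop (𝓝[≠] t) := by
    rw [tendsto_nhdsWithin_iff]
    constructor
    · have : Tendsto (fun n : ℕ => ((n : ℝ) + 1)⁻¹) atTop (𝓝 0) := by
        simpa using tendsto_one_div_add_atTop_nhds_zero_nat (𝕜 := ℝ)
      simpa using tendsto_const_nhds.add this
    · exact Eventually.of_forall fun n => by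
        simp only [Set.mem_compl_iff, Set.mem_singleton_iff]
        nlinarith [hpos n]
  have hcomp := hslope.comp hx
  have key : ∀ n : ℕ, slope f t (t + ((n:ℝ)+1)⁻¹) = quot' f n t := by
    intro n
    rw [slope_def_module]
    congr 1
    rw [add_sub_cancel_left, inv_inv]
  simpa only [Function.comp_def, key] using hcomp

private lemma norm_quot'_le {f : ℝ → E} {K : ℝ≥0} (hf : LipschitzWith K f) (n : ℕ) (t : ℝ) :
    ‖quot' f n t‖ ≤ K := by
  have hε : (0:ℝ) < ((n:ℝ)+1)⁻¹ := by positivity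
  have h1 : ‖f (t + ((n:ℝ)+1)⁻¹) - f t‖ ≤ (K:ℝ) * ((n:ℝ)+1)⁻¹ := by
    have := hf.dist_le_mul (t + ((n:ℝ)+1)⁻¹) t
    rw [dist_eq_norm, dist_eq_norm] at this
    simpa [add_sub_cancel_left, abs_of_pos hε,
      abs_of_pos (show (0:ℝ) < (n:ℝ)+1 by positivity)] using this
  rw [quot', norm_smul, Real.norm_eq_abs, abs_of_pos (show (0:ℝ) < (n:ℝ)+1 by positivity)]
  calc ((n:ℝ)+1) * ‖f (t + ((n:ℝ)+1)⁻¹) - f t‖ ≤ ((n:ℝ)+1) * ((K:ℝ) * ((n:ℝ)+1)⁻¹) :=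
        mul_le_mul_of_nonneg_left h1 (by positivity)
    _ = K := by field_simp

private lemma aesm_of_deriv {f : ℝ → E} {f' : ℝ → E} (hc : Continuous f)
    (hd : ∀ᵐ t : ℝ, HasDerivAt f (f' t) t) : AEStronglyMeasurable f' (volume : Measure ℝ) := by
  refine aestronglyMeasurable_of_tendsto_ae (f := quot' f) atTop
    (fun n => (quot'_continuous hc n).aestronglyMeasurable) ?_
  filter_upwards [hd] with t ht using tendsto_quot' ht

private lemma ftc_lip [CompleteSpace E] {f : ℝ → E} {f' : ℝ → E} {K : ℝ≥0} (hf : LipschitzWith K f)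
    (hd : ∀ᵐ t : ℝ, HasDerivAt f (f' t) t) {a b : ℝ} (hab : a ≤ b) :
    ∫ t in a..b, f' t = f b - f a := by
  have hc : Continuous f := hf.continuous
  have hint : ∀ (c d : ℝ), IntervalIntegrable f volume c d := fun c d => hc.intervalIntegrable c d
  set μ := (volume : Measure ℝ).restrict (Set.Ioc a b) with hμ
  have hdct : Tendsto (fun n => ∫ t, quot' f n t ∂μ) atTop (𝓝 (∫ t, f' t ∂μ)) := by
    apply tendsto_integral_of_dominated_convergence (fun _ => (K:ℝ))
    · exact fun n => (quot'_continuous hc n).aestronglyMeasurable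
    · exact integrable_const _
    · exact fun n => Eventually.of_forall fun t => norm_quot'_le hf n t
    · exact ae_restrict_of_ae ((hd.mono) fun t ht => tendsto_quot' ht)
  have hcomp : ∀ n : ℕ, ∫ t, quot' f n t ∂μ =
      ((n:ℝ)+1) • ((∫ t in b..(b + ((n:ℝ)+1)⁻¹), f t) - ∫ t in a..(a + ((n:ℝ)+1)⁻¹), f t) := by
    intro n
    set ε := ((n:ℝ)+1)⁻¹ with hε
    have h1 : ∫ t, quot' f n t ∂μ = ((n:ℝ)+1) • ∫ t in a..b, (f (t + ε) - f t) := by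
      rw [hμ, ← intervalIntegral.integral_of_le hab, ← intervalIntegral.integral_smul]
      rfl
    rw [h1]
    congr 1
    have hci : Continuous fun t : ℝ => f (t + ε) := by fun_prop
    rw [intervalIntegral.integral_sub (hci.intervalIntegrable a b) (hint a b)]
    rw [intervalIntegral.integral_comp_add_right (fun t => f t) ε]
    have e1 : ∫ t in (a+ε)..(b+ε), f t = (∫ t in (a+ε)..b, f t) + ∫ t in b..(b+ε), f t :=
      (integral_add_adjacent_intervals (hint _ _) (hint _ _)).symm
    have e2 : ∫ t in a..b, f t = (∫ t in a..(a+ε), f t) + ∫ t in (a+ε)..b, f t :=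
      (integral_add_adjacent_intervals (hint _ _) (hint _ _)).symm
    rw [e1, e2]
    abel
  have hend : ∀ c : ℝ, Tendsto (fun n : ℕ => ((n:ℝ)+1) • ∫ t in c..(c + ((n:ℝ)+1)⁻¹), f t)
      atTop (𝓝 (f c)) := by
    intro c
    have hF : HasDerivAt (fun u => ∫ t in c..u, f t) (f c) c :=
      integral_hasDerivAt_right (hint c c) (hc.stronglyMeasurableAtFilter _ _) hc.continuousAt
    have hq := tendsto_quot' hF
    convert hq using 2 with n
    simp [quot', intervalIntegral.integral_same]
  have hlim2 : Tendsto (fun n => ∫ t, quot' f n t ∂μ) atTop (𝓝 (f b - f a)) := by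
    simp only [hcomp]
    have h3 := (hend b).sub (hend a)
    convert h3 using 2 with n
    rw [smul_sub]
  rw [intervalIntegral.integral_of_le hab]
  exact tendsto_nhds_unique hdct hlim2

private lemma key_pt (v : E3) (hv : ‖v‖ = 1) {ρ : ℝ} (hρ : 0 ≤ ρ)
    (hd : ‖v - EuclideanSpace.single 2 (1:ℝ)‖ ≤ ρ) :
    1 - ρ^2/2 ≤ v 2 ∧ Real.sqrt ((v 0)^2 + (v 1)^2) ≤ ρ := by
  have hsum : (v 0)^2 + (v 1)^2 + (v 2)^2 = 1 := by
    have h1 : Real.sqrt ((v 0)^2 + (v 1)^2 + (v 2)^2) = 1 := by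
      rw [← hv, EuclideanSpace.norm_eq]
      congr 1
      simp [Fin.sum_univ_three, Real.norm_eq_abs, sq_abs]
    nlinarith [Real.sq_sqrt (show (0:ℝ) ≤ (v 0)^2 + (v 1)^2 + (v 2)^2 by positivity), h1]
  have hdsum : (v 0)^2 + (v 1)^2 + (v 2 - 1)^2 ≤ ρ^2 := by
    have hnn : ‖v - EuclideanSpace.single 2 (1:ℝ)‖
        = Real.sqrt ((v 0)^2 + (v 1)^2 + (v 2 - 1)^2) := by
      rw [EuclideanSpace.norm_eq]
      congr 1
      simp [Fin.sum_univ_three, EuclideanSpace.single_apply, Real.norm_eq_abs, sq_abs]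
    rw [hnn] at hd
    have h2 := Real.sq_sqrt (show (0:ℝ) ≤ (v 0)^2 + (v 1)^2 + (v 2 - 1)^2 by positivity)
    nlinarith [Real.sqrt_nonneg ((v 0)^2 + (v 1)^2 + (v 2 - 1)^2)]
  constructor
  · nlinarith
  · have h2 : (v 0)^2 + (v 1)^2 ≤ ρ^2 := by nlinarith [sq_nonneg (v 2 - 1)]
    calc Real.sqrt ((v 0)^2 + (v 1)^2) ≤ Real.sqrt (ρ^2) := Real.sqrt_le_sqrt h2
      _ = ρ := Real.sqrt_sq hρ

private lemma coord2_le (x : E3) : x 2 ≤ ‖x‖ := by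
  refine le_trans (le_abs_self _) ?_
  rw [← Real.sqrt_sq_eq_abs, EuclideanSpace.norm_eq]
  apply Real.sqrt_le_sqrt
  simp only [Fin.sum_univ_three, Real.norm_eq_abs, sq_abs]
  nlinarith [sq_nonneg (x 0), sq_nonneg (x 1)]

private lemma norm_perp (x : E3) :
    ‖x - (x 2) • EuclideanSpace.single 2 (1:ℝ)‖ = Real.sqrt ((x 0)^2 + (x 1)^2) := by
  rw [EuclideanSpace.norm_eq]
  congr 1
  simp [Fin.sum_univ_three, EuclideanSpace.single_apply, Real.norm_eq_abs, sq_abs]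

private noncomputable def P2 : E3 →L[ℝ] ℝ := EuclideanSpace.proj (2 : Fin 3)

end Helpers

/-- local straightness of a unit-speed curve on the scale of the security radius.
Coordinates are chosen with `γ(0) = 0` and `γ'(0) = e₃`; `γ_∥` is the third component and
`γ_⊥` the first two. -/
theorem stmt_4 (γ γd : ℝ → E3)
    (hper : ∀ t, γ (t + 1) = γ t)
    (hlip : LipschitzWith 1 γ)
    (hderiv : ∀ᵐ s, HasDerivAt γ (γd s) s)
    (hunit : ∀ᵐ s, ‖γd s‖ = 1)
    (h0 : γ 0 = 0) (hd0 : γd 0 = EuclideanSpace.single 2 1)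
    (r₀ : ℝ) (hr₀ : 0 < r₀)
    (hfar : ∀ h : ℝ, r₀ ≤ |h| → |h| ≤ 1/2 → r₀ / 2 ≤ ‖γ h - γ 0‖)
    (htang : ∀ᵐ h, |h| ≤ r₀ → ‖γd h - γd 0‖ ≤ |h| / r₀) :
    (∀ᵐ h, 0 < h → h < r₀ →
        (1 - h ^ 2 / (2 * r₀ ^ 2) ≤ γd h 2 ∧
         Real.sqrt ((γd h 0) ^ 2 + (γd h 1) ^ 2) ≤ h / r₀)) ∧
    (∀ h : ℝ, 0 < h → h < r₀ →
        (γ h 2 ≤ h ∧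
         h * (1 - h ^ 2 / (6 * r₀ ^ 2)) ≤ γ h 2 ∧
         Real.sqrt ((γ h 0) ^ 2 + (γ h 1) ^ 2) ≤ h ^ 2 / (2 * r₀))) := by
  have hmeas : AEStronglyMeasurable γd (volume : Measure ℝ) :=
    aesm_of_deriv hlip.continuous hderiv
  have hr₀' : r₀ ≠ 0 := ne_of_gt hr₀
  constructor
  · -- a.e. part
    filter_upwards [hunit, htang] with x hx1 hx2
    intro hx0 hxr
    have habs : |x| ≤ r₀ := by rw [abs_of_pos hx0]; exact hxr.le
    have hdd : ‖γd x - EuclideanSpace.single 2 (1:ℝ)‖ ≤ x / r₀ := by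
      have h3 := hx2 habs
      rw [hd0, abs_of_pos hx0] at h3
      exact h3
    obtain ⟨hA, hB⟩ := key_pt (γd x) hx1 (by positivity) hdd
    refine ⟨?_, hB⟩
    have heq : (x / r₀)^2/2 = x^2/(2*r₀^2) := by rw [div_pow]; ring
    rw [← heq] at *
    linarith [hA]
  · -- integrated part
    intro h hh0 hhr
    -- interval integrability of γd and its components
    have hKnorm : ∀ᵐ t : ℝ, ‖γd t‖ ≤ 1 := hunit.mono fun t ht => le_of_eq ht
    have hint : IntervalIntegrable γd volume 0 h := by
      have hone : IntervalIntegrable (fun _ : ℝ => (1:ℝ)) volume 0 h :=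
        intervalIntegrable_const
      exact hone.mono_fun hmeas.restrict
        (ae_restrict_of_ae (hKnorm.mono fun t ht => by simpa using ht))
    have hint2 : IntervalIntegrable (fun t => γd t 2) volume 0 h := by
      rw [intervalIntegrable_iff] at hint ⊢
      exact P2.integrable_comp hint
    have hγeq : γ h = ∫ t in (0:ℝ)..h, γd t := by
      have hftc := ftc_lip hlip hderiv hh0.le
      rw [h0, sub_zero] at hftc
      exact hftc.symm
    have hcoord : γ h 2 = ∫ t in (0:ℝ)..h, γd t 2 := by
      have h4 : (∫ t in (0:ℝ)..h, γd t 2) = P2 (∫ t in (0:ℝ)..h, γd t) := by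
        rw [← P2.intervalIntegral_comp_comm hint]; rfl
      rw [hγeq, h4]; rfl
    -- upper bound
    have hup : γ h 2 ≤ h := by
      rw [hcoord]
      have hmono := intervalIntegral.integral_mono_ae hh0.le hint2
        (intervalIntegrable_const (c := (1:ℝ)))
        (hunit.mono fun t ht => by
          have := coord2_le (γd t); rw [ht] at this; exact this)
      simpa using hmono
    -- lower bound
    have hlowbound : (fun t => 1 - t^2/(2*r₀^2)) ≤ᵐ[volume.restrict (Set.Icc 0 h)]
        (fun t => γd t 2) := by
      filter_upwards [ae_restrict_of_ae (hunit.and htang),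
        ae_restrict_mem measurableSet_Icc] with t ht htmem
      obtain ⟨ht1, ht2⟩ := ht
      have ht0 : 0 ≤ t := htmem.1
      have habs : |t| ≤ r₀ := by rw [abs_of_nonneg ht0]; linarith [htmem.2]
      have hdd := ht2 habs
      rw [hd0, abs_of_nonneg ht0] at hdd
      obtain ⟨hA, _⟩ := key_pt (γd t) ht1 (by positivity) hdd
      have heq : (t / r₀)^2/2 = t^2/(2*r₀^2) := by rw [div_pow]; ring
      rw [heq] at hA
      exact hA
    have hpolyc : Continuous fun t : ℝ => 1 - t^2/(2*r₀^2) := by fun_prop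
    have hlow : h * (1 - h^2/(6*r₀^2)) ≤ γ h 2 := by
      rw [hcoord]
      have hmono := intervalIntegral.integral_mono_ae_restrict hh0.le
        (hpolyc.intervalIntegrable 0 h) hint2 hlowbound
      have hcalc : ∫ t in (0:ℝ)..h, (1 - t^2/(2*r₀^2)) = h * (1 - h^2/(6*r₀^2)) := by
        have hc2 : Continuous fun t : ℝ => t^2/(2*r₀^2) := by fun_prop
        rw [intervalIntegral.integral_sub intervalIntegrable_const
          (hc2.intervalIntegrable 0 h)]
        rw [intervalIntegral.integral_div, integral_pow]
        simp only [intervalIntegral.integral_const, smul_eq_mul, sub_zero, mul_one]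
        push_cast
        field_simp
        ring
      rw [hcalc] at hmono
      exact hmono
    -- perpendicular bound
    set e₃ : E3 := EuclideanSpace.single 2 (1:ℝ) with he₃
    have hint3 : IntervalIntegrable (fun t => (γd t 2) • e₃) volume 0 h := by
      have h5 := hint2
      rw [intervalIntegrable_iff] at h5 ⊢
      exact h5.smul_const e₃
    have hwint : ∫ t in (0:ℝ)..h, (γd t - (γd t 2) • e₃) = γ h - (γ h 2) • e₃ := by
      rw [intervalIntegral.integral_sub hint hint3, intervalIntegral.integral_smul_const,
        ← hcoord, ← hγeq]
    have hperp : ‖γ h - (γ h 2) • e₃‖ ≤ h^2/(2*r₀) := by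
      rw [← hwint]
      have hbd : ∀ᵐ t ∂(volume : Measure ℝ).restrict (Set.uIoc 0 h),
          ‖γd t - (γd t 2) • e₃‖ ≤ t / r₀ := by
        filter_upwards [ae_restrict_of_ae (hunit.and htang),
          ae_restrict_mem measurableSet_uIoc] with t ht htmem
        obtain ⟨ht1, ht2⟩ := ht
        rw [Set.uIoc_of_le hh0.le] at htmem
        have ht0 : 0 ≤ t := le_of_lt htmem.1
        have habs : |t| ≤ r₀ := by rw [abs_of_nonneg ht0]; linarith [htmem.2]
        have hdd := ht2 habs
        rw [hd0, abs_of_nonneg ht0] at hdd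
        obtain ⟨_, hB⟩ := key_pt (γd t) ht1 (by positivity) hdd
        rw [he₃, norm_perp (γd t)]
        exact hB
      have hgc : Continuous fun t : ℝ => t / r₀ := by fun_prop
      have := intervalIntegral.norm_integral_le_abs_of_norm_le hbd (hgc.intervalIntegrable 0 h)
      refine this.trans ?_
      have hcalc2 : ∫ t in (0:ℝ)..h, t / r₀ = h^2/(2*r₀) := by
        rw [intervalIntegral.integral_div, integral_id]
        ring
      rw [hcalc2, abs_of_nonneg (by positivity)]
    refine ⟨hup, hlow, ?_⟩
    rw [← norm_perp (γ h)]
    exact hperp
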